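/- Let x₀* in the positive orthant be a fixed point of the conservative Lotka-Volterra system ẋ = diag(x)·(λ + K·D·x), λ = K·L, with K skew-symmetric, D diagonal invertible. For any N₀ ∈ ker(K) with x₀* = -D⁻¹(L - N₀), the function H_C(x) = Σ_j(D_{jj} x_j + (L_j - N₀_j) ln x_j) is constant along trajectories: its derivative along the vector field vanishes identically on the positive orthant. -/

import Mathlib

open Real Finset Matrix

theorem energy_casimir_constant_along_flow (m : ℕ)
    (K : Matrix (Fin m) (Fin m) ℝ) (hK : Kᵀ = -K)
    (d : Fin m → ℝ) (hd : ∀ i, d i ≠ 0)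
    (L : Fin m → ℝ)
    (lam : Fin m → ℝ) (hlam : lam = K.mulVec L)
    (F : (Fin m → ℝ) → (Fin m → ℝ))
    (hF : F = fun x i => x i * (lam i + ((K * Matrix.diagonal d).mulVec x) i))
    (N₀ : Fin m → ℝ) (hN₀ : K.mulVec N₀ = 0)
    (x₀ : Fin m → ℝ)
    (hx₀def : x₀ = -(Matrix.diagonal d)⁻¹.mulVec (L - N₀))
    (hx₀pos : ∀ i, 0 < x₀ i)
    (HC : (Fin m → ℝ) → ℝ)
    (hHC : HC = fun x => ∑ j : Fin m, (d j * x j + (L j - N₀ j) * Real.log (x j))) :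
    ∀ x : Fin m → ℝ, (∀ i, 0 < x i) →
      ∑ i : Fin m, fderiv ℝ HC x (Pi.single i 1) * F x i = 0 := by
  intro x hx
  -- the derivative of HC at x
  set c : Fin m → ℝ := fun j => L j - N₀ j with hc
  have hder : HasFDerivAt HC
      (∑ j : Fin m, (d j + c j / x j) •
        (ContinuousLinearMap.proj j : (Fin m → ℝ) →L[ℝ] ℝ)) x := by
    subst hHC
    have : ∀ j : Fin m, HasFDerivAt (fun y : Fin m → ℝ => d j * y j + c j * Real.log (y j))
        ((d j + c j / x j) • (ContinuousLinearMap.proj j : (Fin m → ℝ) →L[ℝ] ℝ)) x := by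
      intro j
      have h1 : HasDerivAt (fun t : ℝ => d j * t + c j * Real.log t)
          (d j + c j / x j) (x j) := by
        have := ((hasDerivAt_id (x j)).const_mul (d j)).add
          ((Real.hasDerivAt_log (ne_of_gt (hx j))).const_mul (c j))
        simpa [Pi.add_def, mul_comm, div_eq_mul_inv] using this
      exact h1.comp_hasFDerivAt (f := fun y : Fin m → ℝ => y j) x (hasFDerivAt_apply j x)
    exact HasFDerivAt.fun_sum fun j _ => this j
  have hfd : ∀ i : Fin m, fderiv ℝ HC x (Pi.single i 1) = d i + c i / x i := by
    intro i
    rw [hder.fderiv]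
    simp [ContinuousLinearMap.sum_apply, Pi.single_apply]
  -- rewrite F
  set y : Fin m → ℝ := fun j => d j * x j + c j with hy
  have hFx : ∀ i, F x i = x i * (K.mulVec y) i := by
    intro i
    have h1 : (K * Matrix.diagonal d).mulVec x = K.mulVec (fun j => d j * x j) := by
      have hdx : (Matrix.diagonal d).mulVec x = fun j => d j * x j := by
        funext j; simp [Matrix.mulVec_diagonal]
      rw [← Matrix.mulVec_mulVec, hdx]
    have h2 : K.mulVec y = fun i => lam i + ((K * Matrix.diagonal d).mulVec x) i := by
      have : y = (fun j => d j * x j) + L - N₀ := by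
        funext j; simp [hy, hc]; ring
      funext i
      rw [this, hlam, h1]
      have := congrFun hN₀ i
      simp [Matrix.mulVec, dotProduct, Finset.sum_add_distrib, Finset.sum_sub_distrib,
        mul_add, mul_sub] at this ⊢
      linarith
    rw [hF, h2]
  -- the sum equals yᵀ K y
  have hsum : ∑ i : Fin m, fderiv ℝ HC x (Pi.single i 1) * F x i
      = y ⬝ᵥ K.mulVec y := by
    unfold dotProduct
    refine Finset.sum_congr rfl fun i _ => ?_
    rw [hfd i, hFx i]
    have hxi := (hx i).ne'
    field_simp [hy]
    ring
  rw [hsum]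
  -- skew-symmetry kills it
  have h1 : y ⬝ᵥ K.mulVec y = -(y ⬝ᵥ K.mulVec y) := by
    conv_lhs => rw [Matrix.dotProduct_mulVec]
    rw [← Matrix.mulVec_transpose, hK]
    simp [Matrix.neg_mulVec, dotProduct_comm]
  linarith
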